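/- Let n > 1 and let I_{2n+1} = {−n, −n+1, …, n}. Let Φ be the Feigin–Tsygan isomorphism gJ(R) → gl_{I_{2n+1}}(J(R)) determined by Φ(E_{m+r(2n+1), m'+s(2n+1)}(a)) = e_{m,m'}(E_{r,s}(a)) for m,m' ∈ I_{2n+1}, r,s ∈ ℤ, a ∈ R. Define o_J^{odd}(R) = {X ∈ gJ(R) : τ_0^s(X) = −X}, where τ_0^s(X) = J_0^s ᵗ(X) J_0^s with J_0^s = Σ_{i∈ℤ} E_{i,−i}, and define o_{2n+1}(J(R)) = {X ∈ gl_{I_{2n+1}}(J(R)) : X^† J_n^B + J_n^B X = 0}, where J_n^B = Σ_{i=−n}^{n} e_{i,−i} and X^† is the transpose of X with the anti-involution ∗ of J(R) (E_{k,l}(r)^∗ = E_{−l,−k}(r̄)) applied to each entry. Then Φ restricts to an isomorphism of Lie algebras o_J^{odd}(R) → o_{2n+1}(J(R)). -/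

import Mathlib

/-!
STATEMENT 6: The Feigin–Tsygan isomorphism `Φ : gJ(R) → gl_{I_{2n+1}}(J(R))`,
`I_{2n+1} = {−n,…,n}`, `Φ(E_{m+r(2n+1), m'+s(2n+1)}(a)) = e_{m,m'}(E_{r,s}(a))`,
restricts to an isomorphism of Lie algebras
`o_J^{odd}(R) = {X : τ_0^s(X) = −X} → o_{2n+1}(J(R)) = {A : A^† J_n^B + J_n^B A = 0}`.
-/

def HasBand {R : Type*} [Zero R] (A : ℤ → ℤ → R) (N : ℤ) : Prop :=
  ∀ i j : ℤ, N < |i - j| → A i j = 0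

def IsJacobi {R : Type*} [Zero R] (A : ℤ → ℤ → R) : Prop := ∃ N : ℤ, HasBand A N

noncomputable def jmul {R : Type*} [Ring R] (A B : ℤ → ℤ → R) : ℤ → ℤ → R :=
  fun i j => ∑ᶠ l : ℤ, A i l * B l j

noncomputable def lieB {R : Type*} [Ring R] (A B : ℤ → ℤ → R) : ℤ → ℤ → R :=
  jmul A B - jmul B A

def idMat {R : Type*} [Ring R] : ℤ → ℤ → R := fun i j => if i = j then 1 else 0

/-- `τ_0^s(X) = J_0^s ᵗ(X) J_0^s` where `J_0^s = Σ_i E_{i,−i}`; entrywise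
`τ_0^s(X)_{i,j} = bar (X_{−j,−i})`. -/
def tau0s {R : Type*} (bar : R → R) (X : ℤ → ℤ → R) : ℤ → ℤ → R :=
  fun i j => bar (X (-j) (-i))

/-- The anti-involution `∗` of `J(R)`: `E_{k,l}(r)^∗ = E_{−l,−k}(r̄)`. -/
def astar {R : Type*} (bar : R → R) (X : ℤ → ℤ → R) : ℤ → ℤ → R :=
  fun i j => bar (X (-j) (-i))

/-- The index set `I_{2n+1} = {−n, …, n}`. -/
noncomputable def Iodd (n : ℕ) : Finset ℤ := Finset.Icc (-(n : ℤ)) n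

/-- The restriction of the Feigin–Tsygan isomorphism: `Φ(X)_{m,m'} (r,s) =
`X(m + r(2n+1), m' + s(2n+1))`. -/
def PhiOdd {R : Type*} (n : ℕ) (X : ℤ → ℤ → R) :
    {i : ℤ // i ∈ Iodd n} → {i : ℤ // i ∈ Iodd n} → ℤ → ℤ → R :=
  fun m m' r s => X ((m : ℤ) + r * (2 * n + 1)) ((m' : ℤ) + s * (2 * n + 1))

/-- Multiplication of matrices indexed by `I_{2n+1}` with entries in `J(R)`. -/
noncomputable def matMulOdd {R : Type*} [Ring R] (n : ℕ)
    (A B : {i : ℤ // i ∈ Iodd n} → {i : ℤ // i ∈ Iodd n} → ℤ → ℤ → R) :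
    {i : ℤ // i ∈ Iodd n} → {i : ℤ // i ∈ Iodd n} → ℤ → ℤ → R :=
  fun m m' => ∑ p : {i : ℤ // i ∈ Iodd n}, jmul (A m p) (B p m')

/-- `A^†`: transpose with `∗` applied to each entry. -/
def daggerOdd {R : Type*} (bar : R → R) (n : ℕ)
    (A : {i : ℤ // i ∈ Iodd n} → {i : ℤ // i ∈ Iodd n} → ℤ → ℤ → R) :
    {i : ℤ // i ∈ Iodd n} → {i : ℤ // i ∈ Iodd n} → ℤ → ℤ → R :=
  fun m m' => astar bar (A m' m)

/-- `J_n^B = Σ_{i=−n}^{n} e_{i,−i}` (entries in `J(R)`). -/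
def JnB {R : Type*} [Ring R] (n : ℕ) :
    {i : ℤ // i ∈ Iodd n} → {i : ℤ // i ∈ Iodd n} → ℤ → ℤ → R :=
  fun m m' => if (m' : ℤ) = -(m : ℤ) then idMat else 0

lemma mem_Iodd {n : ℕ} {i : ℤ} : i ∈ Iodd n ↔ -(n:ℤ) ≤ i ∧ i ≤ n := Finset.mem_Icc

def dm (n : ℕ) (i : ℤ) : ℤ := (i + n) % (2*(n:ℤ)+1) - n
def dr (n : ℕ) (i : ℤ) : ℤ := (i + (n:ℤ)) / (2*(n:ℤ)+1)

lemma dm_mem (n : ℕ) (i : ℤ) : dm n i ∈ Iodd n := by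
  have h1 : 0 ≤ (i + n) % (2*(n:ℤ)+1) := Int.emod_nonneg _ (by positivity)
  have h2 : (i + n) % (2*(n:ℤ)+1) < 2*(n:ℤ)+1 := Int.emod_lt_of_pos _ (by positivity)
  rw [mem_Iodd]; unfold dm; omega

lemma dm_add (n : ℕ) (i : ℤ) : i = dm n i + dr n i * (2*(n:ℤ)+1) := by
  have h := Int.mul_ediv_add_emod (i + n) (2*(n:ℤ)+1)
  unfold dm dr
  linarith [mul_comm ((i+(n:ℤ))/(2*(n:ℤ)+1)) (2*(n:ℤ)+1)]

lemma Iodd_unique {n : ℕ} {m m' r s : ℤ} (hm : m ∈ Iodd n) (hm' : m' ∈ Iodd n)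
    (h : m + r * (2*(n:ℤ)+1) = m' + s * (2*(n:ℤ)+1)) : m = m' ∧ r = s := by
  rw [mem_Iodd] at hm hm'
  have h2 : m - m' = (s - r) * (2*(n:ℤ)+1) := by linear_combination h
  by_cases hrs : r = s
  · subst hrs
    refine ⟨by have := h2; simp at this; omega, rfl⟩
  · exfalso
    have h3 : 1 ≤ |s - r| := Int.one_le_abs (by omega)
    have h4 : (2*(n:ℤ)+1) ≤ |s - r| * (2*(n:ℤ)+1) :=
      le_mul_of_one_le_left (by positivity) h3
    have h5 : |m - m'| = |s - r| * (2*(n:ℤ)+1) := by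
      rw [h2, abs_mul, abs_of_pos (by positivity : (0:ℤ) < 2*(n:ℤ)+1)]
    have h6 : |m - m'| ≤ 2*(n:ℤ) := by rw [abs_le]; omega
    linarith

lemma dm_spec {n : ℕ} {m : ℤ} (hm : m ∈ Iodd n) (r : ℤ) :
    dm n (m + r * (2*(n:ℤ)+1)) = m ∧ dr n (m + r * (2*(n:ℤ)+1)) = r := by
  have h := dm_add n (m + r * (2*(n:ℤ)+1))
  have := Iodd_unique (dm_mem n (m + r * (2*(n:ℤ)+1))) hm h.symm
  exact this

noncomputable def eOdd (n : ℕ) : ({i : ℤ // i ∈ Iodd n} × ℤ) ≃ ℤ where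
  toFun pq := (pq.1 : ℤ) + pq.2 * (2*(n:ℤ)+1)
  invFun i := (⟨dm n i, dm_mem n i⟩, dr n i)
  left_inv := by
    rintro ⟨⟨m, hm⟩, r⟩
    obtain ⟨h1, h2⟩ := dm_spec hm r
    simp only [Prod.mk.injEq, Subtype.mk.injEq]
    exact ⟨h1, h2⟩
  right_inv := fun i => (dm_add n i).symm

lemma finsum_decomp {R : Type*} [Ring R] (n : ℕ) (f : ℤ → R)
    (hf : (Function.support f).Finite) :
    ∑ᶠ l, f l = ∑ p : {i : ℤ // i ∈ Iodd n}, ∑ᶠ q : ℤ, f ((p:ℤ) + q * (2*(n:ℤ)+1)) := by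
  rw [← finsum_comp_equiv (eOdd n) (f := f)]
  have hsupp : (Function.support (fun pq : {i : ℤ // i ∈ Iodd n} × ℤ => f (eOdd n pq))).Finite := by
    have : (fun pq : {i : ℤ // i ∈ Iodd n} × ℤ => f (eOdd n pq)) = f ∘ (eOdd n) := rfl
    rw [this, Function.support_comp_eq_preimage]
    exact hf.preimage ((eOdd n).injective.injOn)
  rw [finsum_curry _ hsupp, finsum_eq_sum_of_fintype]
  rfl

lemma jacobi_support {R : Type*} [Ring R] {X : ℤ → ℤ → R} (hX : IsJacobi X)
    (i : ℤ) (g : ℤ → R) : (Function.support (fun l => X i l * g l)).Finite := by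
  obtain ⟨N, hN⟩ := hX
  apply Set.Finite.subset (Set.finite_Icc (i - N) (i + N))
  intro l hl
  simp only [Function.mem_support] at hl
  by_contra h
  apply hl
  rw [hN i l ?_, zero_mul]
  simp only [Set.mem_Icc, not_and_or, not_le] at h
  rcases abs_cases (i - l) with ⟨he, _⟩ | ⟨he, _⟩ <;> omega

lemma jmul_idMat {R : Type*} [Ring R] (A : ℤ → ℤ → R) : jmul A idMat = A := by
  funext i j
  have h : (fun l => A i l * idMat l j) = fun l => if l = j then A i j else 0 := by
    funext l; by_cases h : l = j <;> simp [idMat, h]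
  rw [jmul]
  rw [h, finsum_eq_single _ j (fun l hl => by simp [hl]), if_pos rfl]

lemma idMat_jmul {R : Type*} [Ring R] (A : ℤ → ℤ → R) : jmul idMat A = A := by
  funext i j
  have h : (fun l => idMat i l * A l j) = fun l => if l = i then A i j else 0 := by
    funext l
    by_cases h : l = i
    · simp [idMat, h]
    · simp [idMat, h, Ne.symm h]
  rw [jmul]
  rw [h, finsum_eq_single _ i (fun l hl => by simp [hl]), if_pos rfl]

lemma jmul_zero {R : Type*} [Ring R] (A : ℤ → ℤ → R) : jmul A 0 = 0 := by
  funext i j; simp [jmul]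

lemma zero_jmul {R : Type*} [Ring R] (A : ℤ → ℤ → R) : jmul 0 A = 0 := by
  funext i j; simp [jmul]

def negI {n : ℕ} (m : {i : ℤ // i ∈ Iodd n}) : {i : ℤ // i ∈ Iodd n} :=
  ⟨-(m:ℤ), by have := m.2; rw [mem_Iodd] at *; omega⟩

lemma matMul_JnB_right {R : Type*} [Ring R] {n : ℕ}
    (A : {i : ℤ // i ∈ Iodd n} → {i : ℤ // i ∈ Iodd n} → ℤ → ℤ → R)
    (m m' : {i : ℤ // i ∈ Iodd n}) :
    matMulOdd n A (JnB n) m m' = A m (negI m') := by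
  rw [matMulOdd, Finset.sum_eq_single (negI m')]
  · rw [JnB, if_pos (by simp [negI]), jmul_idMat]
  · intro p _ hp
    rw [JnB, if_neg, jmul_zero]
    intro hc
    exact hp (Subtype.ext (by simp [negI]; omega))
  · intro h; exact absurd (Finset.mem_univ _) h

lemma matMul_JnB_left {R : Type*} [Ring R] {n : ℕ}
    (A : {i : ℤ // i ∈ Iodd n} → {i : ℤ // i ∈ Iodd n} → ℤ → ℤ → R)
    (m m' : {i : ℤ // i ∈ Iodd n}) :
    matMulOdd n (JnB n) A m m' = A (negI m) m' := by
  rw [matMulOdd, Finset.sum_eq_single (negI m)]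
  · rw [JnB, if_pos (by simp [negI]), idMat_jmul]
  · intro p _ hp
    rw [JnB, if_neg, zero_jmul]
    intro hc
    exact hp (Subtype.ext (by simp [negI]; omega))
  · intro h; exact absurd (Finset.mem_univ _) h

theorem statement6 (k R : Type*) [Field k] [CharZero k] [Ring R] [Algebra k R]
    (bar : R →ₗ[k] R) (hbar_mul : ∀ r s : R, bar (r * s) = bar s * bar r)
    (hbar_inv : ∀ r : R, bar (bar r) = r) (n : ℕ) (hn : 1 < n) :
    -- well-definedness: entries of `Φ(X)` lie in `J(R)`
    (∀ X : ℤ → ℤ → R, IsJacobi X →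
      ∀ m m' : {i : ℤ // i ∈ Iodd n}, IsJacobi (PhiOdd n X m m')) ∧
    -- `Φ` maps `o_J^{odd}(R)` exactly onto `o_{2n+1}(J(R))`
    (∀ X : ℤ → ℤ → R, IsJacobi X →
      (tau0s (⇑bar) X = -X ↔
        matMulOdd n (daggerOdd (⇑bar) n (PhiOdd n X)) (JnB n) +
          matMulOdd n (JnB n) (PhiOdd n X) = 0)) ∧
    -- `Φ` is a homomorphism of Lie algebras
    (∀ X Y : ℤ → ℤ → R, IsJacobi X → IsJacobi Y →
      PhiOdd n (lieB X Y) =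
        matMulOdd n (PhiOdd n X) (PhiOdd n Y) - matMulOdd n (PhiOdd n Y) (PhiOdd n X)) ∧
    -- injectivity on `o_J^{odd}(R)`
    (∀ X Y : ℤ → ℤ → R, IsJacobi X → IsJacobi Y → tau0s (⇑bar) X = -X →
      tau0s (⇑bar) Y = -Y → PhiOdd n X = PhiOdd n Y → X = Y) ∧
    -- surjectivity onto `o_{2n+1}(J(R))`
    (∀ A : {i : ℤ // i ∈ Iodd n} → {i : ℤ // i ∈ Iodd n} → ℤ → ℤ → R,
      (∀ m m', IsJacobi (A m m')) →
      matMulOdd n (daggerOdd (⇑bar) n A) (JnB n) + matMulOdd n (JnB n) A = 0 →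
      ∃ X : ℤ → ℤ → R, IsJacobi X ∧ tau0s (⇑bar) X = -X ∧ PhiOdd n X = A) := by
  set T : ℤ := 2*(n:ℤ)+1 with hT
  have hTpos : (0:ℤ) < T := by positivity
  -- Part 1: well-definedness
  have part1 : ∀ X : ℤ → ℤ → R, IsJacobi X →
      ∀ m m' : {i : ℤ // i ∈ Iodd n}, IsJacobi (PhiOdd n X m m') := by
    intro X ⟨N, hN⟩ m m'
    refine ⟨|N| + 2*(n:ℤ), fun r s hrs => ?_⟩
    apply hN
    have hm := mem_Iodd.mp m.2
    have hm' := mem_Iodd.mp m'.2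
    have h1 : |N| + 2*(n:ℤ) < |r - s| := hrs
    have h3 : |(r - s) * T| = |r - s| * T := by
      rw [abs_mul, abs_of_pos hTpos]
    have hE : ((m:ℤ) + r * T) - ((m':ℤ) + s * T) = ((r - s) * T) + ((m:ℤ) - (m':ℤ)) := by ring
    rw [hE]
    have key := abs_sub_abs_le_abs_sub ((r - s) * T) (-((m:ℤ) - (m':ℤ)))
    rw [sub_neg_eq_add, abs_neg] at key
    have hb : |(m:ℤ) - (m':ℤ)| ≤ 2*(n:ℤ) := abs_le.mpr ⟨by omega, by omega⟩
    have hrsT : |r - s| ≤ |r - s| * T :=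
      le_mul_of_one_le_right (abs_nonneg _) (by omega)
    linarith [le_abs_self N, h3, key]
  -- matrix condition, entrywise
  have hmat : ∀ (Z : {i : ℤ // i ∈ Iodd n} → {i : ℤ // i ∈ Iodd n} → ℤ → ℤ → R),
      (matMulOdd n (daggerOdd (⇑bar) n Z) (JnB n) + matMulOdd n (JnB n) Z = 0) ↔
      ∀ (m m' : {i : ℤ // i ∈ Iodd n}) (r s : ℤ),
        bar (Z (negI m') m (-s) (-r)) + Z (negI m) m' r s = 0 := by
    intro Z
    constructor
    · intro h m m' r s
      have h2 := congrFun (congrFun (congrFun (congrFun h m) m') r) s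
      simp only [Pi.add_apply, Pi.zero_apply] at h2
      rw [matMul_JnB_right, matMul_JnB_left] at h2
      simpa only [daggerOdd, astar] using h2
    · intro h
      funext m m' r s
      simp only [Pi.add_apply, Pi.zero_apply]
      rw [matMul_JnB_right, matMul_JnB_left]
      simpa only [daggerOdd, astar] using h m m' r s
  -- tau condition, entrywise
  have htau : ∀ X : ℤ → ℤ → R,
      (tau0s (⇑bar) X = -X ↔ ∀ i j : ℤ, bar (X (-j) (-i)) + X i j = 0) := by
    intro X
    constructor
    · intro h i j
      have h2 := congrFun (congrFun h i) j
      simp only [tau0s, Pi.neg_apply] at h2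
      rw [h2, neg_add_cancel]
    · intro h
      funext i j
      simp only [tau0s, Pi.neg_apply]
      exact eq_neg_of_add_eq_zero_left (h i j)
  -- bijection between entrywise conditions
  have hbij : ∀ X : ℤ → ℤ → R,
      ((∀ i j : ℤ, bar (X (-j) (-i)) + X i j = 0) ↔
       ∀ (m m' : {i : ℤ // i ∈ Iodd n}) (r s : ℤ),
         bar (PhiOdd n X (negI m') m (-s) (-r)) + PhiOdd n X (negI m) m' r s = 0) := by
    intro X
    constructor
    · intro h m m' r s
      have h2 := h (-(m:ℤ) + r * T) ((m':ℤ) + s * T)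
      have e1 : -(((m':ℤ)) + s * T) = -(m':ℤ) + (-s) * T := by ring
      have e2 : -((-(m:ℤ)) + r * T) = (m:ℤ) + (-r) * T := by ring
      rw [e1, e2] at h2
      simpa only [PhiOdd, negI] using h2
    · intro h i j
      obtain ⟨a, r', ha, hia⟩ : ∃ a r' : ℤ, a ∈ Iodd n ∧ -i = a + r' * T :=
        ⟨dm n (-i), dr n (-i), dm_mem n (-i), dm_add n (-i)⟩
      obtain ⟨b, s, hb, hjb⟩ : ∃ b s : ℤ, b ∈ Iodd n ∧ j = b + s * T :=
        ⟨dm n j, dr n j, dm_mem n j, dm_add n j⟩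
      have h2 := h ⟨a, ha⟩ ⟨b, hb⟩ (-r') s
      simp only [PhiOdd, negI, neg_neg] at h2
      have g1 : -j = -b + -s * T := by linear_combination -hjb
      have g2 : -i = a + r' * T := hia
      have g3 : i = -a + -r' * T := by linear_combination (-1 : ℤ) * hia
      rw [g1, g2, g3, hjb]
      convert h2 using 4 <;> ring
  refine ⟨part1, ?_, ?_, ?_, ?_⟩
  · -- Part 2
    intro X _
    rw [htau X, hmat (PhiOdd n X)]
    exact hbij X
  · -- Part 3: Lie homomorphism
    intro X Y hX hY
    have hjmulΦ : ∀ (X Y : ℤ → ℤ → R), IsJacobi X →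
        ∀ (m m' : {i : ℤ // i ∈ Iodd n}) (r s : ℤ),
        jmul X Y ((m:ℤ) + r * T) ((m':ℤ) + s * T) =
          ∑ p : {i : ℤ // i ∈ Iodd n}, jmul (PhiOdd n X m p) (PhiOdd n Y p m') r s := by
      intro X Y hX m m' r s
      rw [jmul, finsum_decomp n _ (jacobi_support hX _ _)]
      rfl
    funext m m' r s
    simp only [PhiOdd, lieB, Pi.sub_apply, matMulOdd, Finset.sum_apply]
    rw [hjmulΦ X Y hX m m' r s, hjmulΦ Y X hY m m' r s]
  · -- Part 4: injectivity
    intro X Y _ _ _ _ h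
    funext i j
    have e1 : i = dm n i + dr n i * T := dm_add n i
    have e2 : j = dm n j + dr n j * T := dm_add n j
    have h2 := congrFun (congrFun (congrFun (congrFun h ⟨dm n i, dm_mem n i⟩)
      ⟨dm n j, dm_mem n j⟩) (dr n i)) (dr n j)
    simp only [PhiOdd] at h2
    rw [e1, e2]
    exact h2
  · -- Part 5: surjectivity
    intro A hA hA0
    choose Nf hNf using hA
    set N0 : ℤ := ∑ pq : ({i : ℤ // i ∈ Iodd n} × {i : ℤ // i ∈ Iodd n}), |Nf pq.1 pq.2|
      with hN0
    have hN0le : ∀ m m', |Nf m m'| ≤ N0 := by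
      intro m m'
      exact Finset.single_le_sum (f := fun pq => |Nf pq.1 pq.2|)
        (fun pq _ => abs_nonneg _) (Finset.mem_univ (m, m'))
    refine ⟨fun i j => A ⟨dm n i, dm_mem n i⟩ ⟨dm n j, dm_mem n j⟩ (dr n i) (dr n j),
      ?_, ?_, ?_⟩
    · -- IsJacobi
      refine ⟨N0 * T + 2*(n:ℤ), fun i j hij => ?_⟩
      apply hNf
      have hmi := mem_Iodd.mp (dm_mem n i)
      have hmj := mem_Iodd.mp (dm_mem n j)
      have e1 : i = dm n i + dr n i * T := dm_add n i
      have e2 : j = dm n j + dr n j * T := dm_add n j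
      have h4 : i - j = (dm n i - dm n j) + (dr n i - dr n j) * T := by
        linear_combination e1 - e2
      have h5 : |(dr n i - dr n j) * T| = |dr n i - dr n j| * T := by
        rw [abs_mul, abs_of_pos hTpos]
      have key := abs_sub_abs_le_abs_sub (i - j) (dm n i - dm n j)
      have hE : (i - j) - (dm n i - dm n j) = (dr n i - dr n j) * T := by
        linear_combination h4
      rw [hE] at key
      have hb : |dm n i - dm n j| ≤ 2*(n:ℤ) := abs_le.mpr ⟨by omega, by omega⟩
      have h6 : N0 * T < |dr n i - dr n j| * T := by linarith [hij, h5, key]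
      have h7 : N0 < |dr n i - dr n j| := lt_of_mul_lt_mul_right h6 hTpos.le
      have h8 := hN0le ⟨dm n i, dm_mem n i⟩ ⟨dm n j, dm_mem n j⟩
      have h9 := le_abs_self (Nf ⟨dm n i, dm_mem n i⟩ ⟨dm n j, dm_mem n j⟩)
      linarith
    · -- tau condition
      refine (htau _).mpr ((hbij (fun i j => A ⟨dm n i, dm_mem n i⟩
        ⟨dm n j, dm_mem n j⟩ (dr n i) (dr n j))).mpr ?_)
      rw [hmat A] at hA0
      intro m m' r s
      have key : PhiOdd n (fun i j => A ⟨dm n i, dm_mem n i⟩ ⟨dm n j, dm_mem n j⟩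
          (dr n i) (dr n j)) = A := by
        funext m m' r s
        simp only [PhiOdd]
        obtain ⟨e1, e2⟩ := dm_spec m.2 r
        obtain ⟨e3, e4⟩ := dm_spec m'.2 s
        congr 1 <;> first | (exact Subtype.ext (by assumption)) | assumption
      rw [key]
      exact hA0 m m' r s
    · -- PhiOdd X = A
      funext m m' r s
      simp only [PhiOdd]
      obtain ⟨e1, e2⟩ := dm_spec m.2 r
      obtain ⟨e3, e4⟩ := dm_spec m'.2 s
      congr 1 <;> first | (exact Subtype.ext (by assumption)) | assumption
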